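/- arXiv:2105.12369 — 3 statements merged into one kernel-verified Lean document; each statement's English description precedes it below -/
import Mathlib

section
/- Let G = C \ltimes N with N normal and C finite cyclic, and let \pi be an irreducible representation of N with stabilizer C_\pi \le C under the conjugation action of C on \hat{N}. Then \pi extends to a representation of C_\pi \ltimes N; i.e., there is a representation \tilde{\pi} of C_\pi \ltimes N whose restriction to N equals \pi. -/
open CategoryTheory

/-- Let `G = N ⋊ C` with `N` normal and `C` finite cyclic, and let `π` be an
irreducible representation of `N` with stabilizer `Cπ ≤ C` under the conjugation action of `C`
on the irreducible representations of `N`. Then `π` extends to a representation of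
`N ⋊ Cπ`: there is a representation of `N ⋊[φ|_{Cπ}] Cπ` on the space of `π` whose
restriction along `N → N ⋊ Cπ` equals `π`. -/
theorem extension_to_stabilizer
    {N C : Type} [Group N] [Group C] [Finite N] [Finite C] [IsCyclic C]
    (φ : C →* MulAut N)
    (π : FDRep ℂ N) (hπ : Simple π)
    (Cπ : Subgroup C)
    (hCπ : ∀ c : C, c ∈ Cπ ↔
      ∃ e : π.V ≃ₗ[ℂ] π.V, ∀ n : N,
        (e : π.V →ₗ[ℂ] π.V) ∘ₗ π.ρ n = π.ρ (φ c n) ∘ₗ (e : π.V →ₗ[ℂ] π.V)) :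
    ∃ ρ : Representation ℂ (N ⋊[φ.comp Cπ.subtype] Cπ) π.V,
      ∀ n : N, ρ (SemidirectProduct.inl n) = π.ρ n := by
  classical
  set m := Nat.card Cπ with hm
  have hm0 : 0 < m := Nat.card_pos
  haveI : NeZero m := ⟨hm0.ne'⟩
  let ζ : Multiplicative (ZMod m) ≃* Cπ :=
    zmodCyclicMulEquiv (inferInstance : IsCyclic Cπ)
  let g : Cπ := ζ (Multiplicative.ofAdd 1)
  -- every element of Cπ is a natural power of g
  have hgen : ∀ x : Cπ, ∃ k : ℕ, x = g ^ k := by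
    intro x
    refine ⟨(ζ.symm x).toAdd.val, ?_⟩
    have h1 : Multiplicative.ofAdd ((ζ.symm x).toAdd.val • (1 : ZMod m)) =
        (Multiplicative.ofAdd (1 : ZMod m)) ^ (ζ.symm x).toAdd.val := ofAdd_nsmul _ _
    have h2 : ((ζ.symm x).toAdd.val • (1 : ZMod m)) = (ζ.symm x).toAdd := by
      rw [nsmul_eq_mul, mul_one]
      exact ZMod.natCast_rightInverse _
    calc x = ζ (ζ.symm x) := (ζ.apply_symm_apply x).symm
      _ = ζ (Multiplicative.ofAdd (ζ.symm x).toAdd) := rfl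
      _ = ζ ((Multiplicative.ofAdd (1 : ZMod m)) ^ (ζ.symm x).toAdd.val) := by rw [← h1, h2]
      _ = g ^ (ζ.symm x).toAdd.val := by rw [map_pow]
  -- the intertwiner for the generator
  obtain ⟨e, he⟩ := (hCπ g.1).mp g.2
  let ρ' : N →* Module.End ℂ π.V := π.ρ
  have heM : ∀ n : N, (e : π.V →ₗ[ℂ] π.V) * ρ' n
      = ρ' (φ g.1 n) * (e : π.V →ₗ[ℂ] π.V) := fun n => he n
  let u₀ : (Module.End ℂ π.V)ˣ := ⟨(e : π.V →ₗ[ℂ] π.V), (e.symm : π.V →ₗ[ℂ] π.V),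
    by ext x; simp [Module.End.mul_apply], by ext x; simp [Module.End.mul_apply]⟩
  -- powers of u₀ intertwine powers of g
  have hpow : ∀ k : ℕ, ∀ n : N, ((u₀ ^ k : (Module.End ℂ π.V)ˣ) : Module.End ℂ π.V) * ρ' n
      = ρ' (φ (g.1 ^ k) n) * ((u₀ ^ k : (Module.End ℂ π.V)ˣ) : Module.End ℂ π.V) := by
    intro k
    induction k with
    | zero =>
      intro n
      rw [pow_zero, pow_zero, map_one, MulAut.one_apply, Units.val_one, one_mul, mul_one]
    | succ k ih =>
      intro n
      have hv : ((u₀ ^ (k+1) : (Module.End ℂ π.V)ˣ) : Module.End ℂ π.V)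
          = ((u₀ ^ k : (Module.End ℂ π.V)ˣ) : Module.End ℂ π.V) * (e : π.V →ₗ[ℂ] π.V) := by
        rw [pow_succ]; rfl
      rw [hv, mul_assoc, heM n, ← mul_assoc, ih, mul_assoc]
      congr 2
      rw [pow_succ, map_mul]
      rfl
  -- u₀^m commutes with the representation
  have hgm : g.1 ^ m = 1 := by
    have h1 : g ^ m = 1 := pow_card_eq_one'
    have := congrArg (Subgroup.subtype Cπ) h1
    simpa using this
  have hcomm : ∀ n : N, ((u₀ ^ m : (Module.End ℂ π.V)ˣ) : Module.End ℂ π.V) * ρ' n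
      = ρ' n * ((u₀ ^ m : (Module.End ℂ π.V)ˣ) : Module.End ℂ π.V) := by
    intro n
    have := hpow m n
    rwa [hgm, map_one, MulAut.one_apply] at this
  -- Schur : u₀^m is a scalar
  have hschur : ∃ c : ℂ, ((u₀ ^ m : (Module.End ℂ π.V)ˣ) : Module.End ℂ π.V)
      = c • (1 : Module.End ℂ π.V) := by
    let F : π ⟶ π := ⟨FGModuleCat.ofHom ((u₀ ^ m : (Module.End ℂ π.V)ˣ) : Module.End ℂ π.V),
      fun n => FGModuleCat.hom_ext (hcomm n)⟩
    obtain ⟨c, hc⟩ := endomorphism_simple_eq_smul_id (𝕜 := ℂ) F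
    exact ⟨c, (congrArg (fun f : π ⟶ π => f.hom.hom.hom) hc).symm⟩
  obtain ⟨c, hc⟩ := hschur
  have hc0 : c ≠ 0 := by
    intro h
    have h1 : ((u₀ ^ m : (Module.End ℂ π.V)ˣ) : Module.End ℂ π.V) = 0 := by
      rw [hc, h, zero_smul]
    have h2 : (1 : Module.End ℂ π.V) = 0 := by
      have := (u₀ ^ m).mul_inv
      rw [h1, zero_mul] at this
      exact this.symm
    have h3 : (𝟙 π : π ⟶ π) = 0 := by
      apply Action.hom_ext
      apply FGModuleCat.hom_ext
      exact h2
    exact CategoryTheory.id_nonzero π h3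
  obtain ⟨μ, hμ⟩ := IsAlgClosed.exists_pow_nat_eq c hm0
  have hμ0 : μ ≠ 0 := by
    intro h; apply hc0; rw [← hμ, h, zero_pow hm0.ne']
  -- the normalized intertwiner
  let u : (Module.End ℂ π.V)ˣ := ⟨μ⁻¹ • (e : π.V →ₗ[ℂ] π.V), μ • (e.symm : π.V →ₗ[ℂ] π.V),
    by ext x; simp [Module.End.mul_apply, smul_smul, inv_mul_cancel₀ hμ0, mul_inv_cancel₀ hμ0],
    by ext x; simp [Module.End.mul_apply, smul_smul, inv_mul_cancel₀ hμ0, mul_inv_cancel₀ hμ0]⟩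
  have hu : ∀ n : N, (u : Module.End ℂ π.V) * ρ' n = ρ' (φ g.1 n) * (u : Module.End ℂ π.V) := by
    intro n
    show (μ⁻¹ • (e : π.V →ₗ[ℂ] π.V)) * ρ' n = ρ' (φ g.1 n) * (μ⁻¹ • (e : π.V →ₗ[ℂ] π.V))
    rw [smul_mul_assoc, heM n, mul_smul_comm]
  have hum : u ^ m = 1 := by
    apply Units.ext
    show ((u ^ m : (Module.End ℂ π.V)ˣ) : Module.End ℂ π.V) = 1
    have h1 : ((u ^ m : (Module.End ℂ π.V)ˣ) : Module.End ℂ π.V)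
        = (μ⁻¹ • (e : π.V →ₗ[ℂ] π.V)) ^ m := by
      rw [Units.val_pow_eq_pow_val]
    have h2 : ((u₀ ^ m : (Module.End ℂ π.V)ˣ) : Module.End ℂ π.V)
        = ((e : π.V →ₗ[ℂ] π.V) : Module.End ℂ π.V) ^ m := by
      rw [Units.val_pow_eq_pow_val]
    rw [h1, smul_pow, ← h2, hc, smul_smul, inv_pow, hμ, inv_mul_cancel₀ hc0, one_smul]
  -- build the homomorphism σ : Cπ →* units
  let θ : ℤ →+ Additive (Module.End ℂ π.V)ˣ :=
    zmultiplesHom (Additive (Module.End ℂ π.V)ˣ) (Additive.ofMul u)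
  have hθ : θ m = 0 := by
    show (m : ℤ) • Additive.ofMul u = 0
    rw [← ofMul_zpow, zpow_natCast, hum]
    rfl
  let σ : Cπ →* (Module.End ℂ π.V)ˣ :=
    (AddMonoidHom.toMultiplicativeLeft (ZMod.lift m ⟨θ, hθ⟩)).comp ζ.symm.toMonoidHom
  have hσg : σ g = u := by
    show (AddMonoidHom.toMultiplicativeLeft (ZMod.lift m ⟨θ, hθ⟩))
      (ζ.symm (ζ (Multiplicative.ofAdd 1))) = u
    rw [ζ.symm_apply_apply]
    show ((ZMod.lift m ⟨θ, hθ⟩) (1 : ZMod m)).toMul = u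
    have h1 : ((1 : ℤ) : ZMod m) = (1 : ZMod m) := by norm_cast
    rw [← h1, ZMod.lift_coe]
    show ((1 : ℤ) • Additive.ofMul u).toMul = u
    rw [one_zsmul]
    rfl
  -- intertwining for all of Cπ
  have hP : ∀ x : Cπ, ∀ n : N, (σ x : Module.End ℂ π.V) * ρ' n
      = ρ' (φ x.1 n) * (σ x : Module.End ℂ π.V) := by
    have key : ∀ k : ℕ, ∀ n : N, (σ (g ^ k) : Module.End ℂ π.V) * ρ' n
        = ρ' (φ ((g ^ k : Cπ) : C) n) * (σ (g ^ k) : Module.End ℂ π.V) := by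
      intro k
      induction k with
      | zero =>
        intro n
        rw [pow_zero, map_one, Units.val_one, one_mul, mul_one]
        simp
      | succ k ih =>
        intro n
        have h1 : (σ (g ^ (k+1)) : Module.End ℂ π.V)
            = (σ (g ^ k) : Module.End ℂ π.V) * (u : Module.End ℂ π.V) := by
          rw [pow_succ, map_mul, hσg]; rfl
        rw [h1, mul_assoc, hu n, ← mul_assoc, ih, mul_assoc]
        congr 2
        have h2 : ((g ^ (k+1) : Cπ) : C) = ((g ^ k : Cπ) : C) * g.1 := by
          rw [pow_succ]; rfl
        rw [h2, map_mul]
        rfl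
    intro x n
    obtain ⟨k, rfl⟩ := hgen x
    exact key k n
  -- assemble the representation of the semidirect product
  have hcompat : ∀ cg : Cπ, (ρ'.toHomUnits).comp ((φ.comp Cπ.subtype) cg).toMonoidHom
      = (MulAut.conj (σ cg)).toMonoidHom.comp ρ'.toHomUnits := by
    intro cg
    refine MonoidHom.ext fun n => Units.ext ?_
    show ((ρ'.toHomUnits (φ cg.1 n) : Module.End ℂ π.V))
      = ((σ cg * ρ'.toHomUnits n * (σ cg)⁻¹ : (Module.End ℂ π.V)ˣ) : Module.End ℂ π.V)
    have h1 : ∀ n' : N, ((ρ'.toHomUnits n' : Module.End ℂ π.V)) = ρ' n' := fun _ => rfl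
    rw [Units.val_mul, Units.val_mul, h1, h1, hP cg n, mul_assoc, ← Units.val_mul,
      mul_inv_cancel, Units.val_one, mul_one]
  refine ⟨(Units.coeHom (Module.End ℂ π.V)).comp
    (SemidirectProduct.lift ρ'.toHomUnits σ hcompat), ?_⟩
  intro n
  show ((SemidirectProduct.lift ρ'.toHomUnits σ hcompat
    (SemidirectProduct.inl n) : (Module.End ℂ π.V)ˣ) : Module.End ℂ π.V) = π.ρ n
  rw [SemidirectProduct.lift_inl]
  rfl
end

section
/- Let G = C \ltimes N with N normal and C cyclic, and let \rho be an irreducible representation of G. Then \rho|_N is irreducible if and only if \rho is not isomorphic to \rho \otimes \chi for any nontrivial one-dimensional character \chi of G that is trivial on N (equivalently, character of C). -/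
open CategoryTheory

namespace CliffordAux

open Module Representation

noncomputable section

/-! ### Generalities for `FDRep ℂ H` -/

variable {H : Type} [Group H]

theorem hom_comm_apply' {A B : FDRep ℂ H} (f : A ⟶ B) (g : H) (x : A) :
    f.hom (A.ρ g x) = B.ρ g (f.hom x) :=
  by have := congrArg (fun u => u.hom.hom x) (f.comm g); exact this

/-- The subrepresentation on an invariant submodule. -/
def subRep (X : FDRep ℂ H) (p : Submodule ℂ X)
    (hp : ∀ (g : H) (x : X), x ∈ p → X.ρ g x ∈ p) : FDRep ℂ H :=
  FDRep.of (V := p)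
    { toFun := fun g => (X.ρ g).restrict (fun x hx => hp g x hx)
      map_one' := by ext x; simp
      map_mul' := fun g h => by ext x; simp }

def subRepIncl (X : FDRep ℂ H) (p : Submodule ℂ X)
    (hp : ∀ (g : H) (x : X), x ∈ p → X.ρ g x ∈ p) : subRep X p hp ⟶ X where
  hom := FGModuleCat.ofHom p.subtype
  comm g := by ext x; rfl

instance subRepIncl_mono (X : FDRep ℂ H) (p : Submodule ℂ X)
    (hp : ∀ (g : H) (x : X), x ∈ p → X.ρ g x ∈ p) : Mono (subRepIncl X p hp) := by
  apply Functor.mono_of_mono_map (Action.forget (FGModuleCat ℂ) (MonCat.of H))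
  apply Functor.mono_of_mono_map (forget₂ (FGModuleCat ℂ) (ModuleCat ℂ))
  rw [ModuleCat.mono_iff_injective]
  exact Subtype.val_injective

/-- B1: a simple `FDRep` has no nontrivial invariant submodules. -/
theorem inv_trivial_of_simple (X : FDRep ℂ H) (hX : Simple X) (p : Submodule ℂ X)
    (hp : ∀ (g : H) (x : X), x ∈ p → X.ρ g x ∈ p) : p = ⊥ ∨ p = ⊤ := by
  haveI := hX
  by_cases hbot : p = ⊥
  · exact Or.inl hbot
  right
  have hne : (subRepIncl X p hp) ≠ 0 := by
    obtain ⟨x, hx, hx0⟩ := Submodule.exists_mem_ne_zero_of_ne_bot hbot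
    intro h
    have : (subRepIncl X p hp).hom ⟨x, hx⟩ = 0 := by rw [h]; rfl
    exact hx0 this
  have : IsIso (subRepIncl X p hp) := isIso_of_mono_of_nonzero hne
  rw [Submodule.eq_top_iff']
  intro x
  have h1 : (inv (subRepIncl X p hp) ≫ subRepIncl X p hp) = 𝟙 X := IsIso.inv_hom_id _
  have h2 : (subRepIncl X p hp).hom ((inv (subRepIncl X p hp)).hom x) = x := by
    have := congrArg Action.Hom.hom h1
    exact congrFun (congrArg (fun (f : X.V ⟶ X.V) => (f : X → X)) this) x
  exact h2 ▸ ((inv (subRepIncl X p hp)).hom x).2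

/-- B2: an `FDRep` with no nontrivial invariant submodules is simple. -/
theorem simple_of_inv_trivial (X : FDRep ℂ H) (hX : Nontrivial X)
    (hp : ∀ p : Submodule ℂ X, (∀ (g : H) (x : X), x ∈ p → X.ρ g x ∈ p) → p = ⊥ ∨ p = ⊤) :
    Simple X := by
  constructor
  intro Y f hf
  constructor
  · intro hiso h0
    obtain ⟨x, hx⟩ := exists_ne (0 : X)
    have h1 : (inv f ≫ f) = 𝟙 X := IsIso.inv_hom_id f
    have hf0 : f.hom = 0 := by rw [h0]; rfl
    apply hx
    calc x = (𝟙 X : X ⟶ X).hom x := rfl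
      _ = (inv f ≫ f).hom x := by rw [h1]
      _ = f.hom ((inv f).hom x) := rfl
      _ = 0 := by rw [hf0]; exact rfl
  · intro hne
    have hrange : ∀ (g : H) (x : X), x ∈ LinearMap.range f.hom.hom.hom → X.ρ g x ∈ LinearMap.range f.hom.hom.hom := by
      rintro g x ⟨y, hy⟩
      exact ⟨Y.ρ g y, (hom_comm_apply' f g y).trans (congrArg (X.ρ g) hy)⟩
    have hsurj : Function.Surjective f.hom := by
      rcases hp _ hrange with h | h
      · exfalso
        apply hne
        apply Action.hom_ext
        apply FGModuleCat.hom_ext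
        apply LinearMap.ext
        intro y
        have : f.hom y ∈ (⊥ : Submodule ℂ X) := h ▸ LinearMap.mem_range_self f.hom.hom.hom y
        exact (Submodule.mem_bot ℂ).mp this
      · exact fun x => (LinearMap.range_eq_top (f := f.hom.hom.hom)).mp h x
    have hinj : Function.Injective f.hom.hom.hom := by
      have hqinv : ∀ (g : H) (y : Y), y ∈ LinearMap.ker f.hom.hom.hom → Y.ρ g y ∈ LinearMap.ker f.hom.hom.hom := by
        intro g y hy
        rw [LinearMap.mem_ker] at hy ⊢
        exact (hom_comm_apply' f g y).trans ((congrArg _ hy).trans (map_zero _))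
      have hcomp : subRepIncl Y _ hqinv ≫ f = (0 : subRep Y _ hqinv ⟶ Y) ≫ f := by
        apply Action.hom_ext
        apply FGModuleCat.hom_ext
        apply LinearMap.ext
        intro x
        have h0 : ((0 : subRep Y _ hqinv ⟶ Y) ≫ f).hom x = 0 := by
          show f.hom ((0 : _ →ₗ[ℂ] _) x) = 0
          rw [LinearMap.zero_apply, map_zero]
        exact x.2.trans h0.symm
      have hz := (cancel_mono f).mp hcomp
      rw [← LinearMap.ker_eq_bot (f := f.hom.hom.hom), Submodule.eq_bot_iff]
      intro y hy
      have : (subRepIncl Y _ hqinv).hom ⟨y, hy⟩ = (0 : subRep Y _ hqinv ⟶ Y).hom ⟨y, hy⟩ := by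
        rw [hz]
      exact this
    let e := LinearEquiv.ofBijective f.hom.hom.hom ⟨hinj, hsurj⟩
    refine ⟨⟨⟨FGModuleCat.ofHom e.symm.toLinearMap, fun g => ?_⟩, ?_, ?_⟩⟩
    · apply FGModuleCat.hom_ext
      apply LinearMap.ext
      intro x
      apply hinj
      show f.hom (e.symm (X.ρ g x)) = f.hom (Y.ρ g (e.symm x))
      rw [hom_comm_apply' f g]
      show _ = X.ρ g (e (e.symm x))
      rw [e.apply_symm_apply]
      show (e (e.symm _)) = _
      rw [e.apply_symm_apply]
    · apply Action.hom_ext; apply FGModuleCat.hom_ext; apply LinearMap.ext; intro y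
      show e.symm (f.hom y) = y
      exact e.symm_apply_apply y
    · apply Action.hom_ext; apply FGModuleCat.hom_ext; apply LinearMap.ext; intro x
      show f.hom (e.symm x) = x
      exact e.apply_symm_apply x

theorem nontrivial_of_simple (X : FDRep ℂ H) (hX : Simple X) : Nontrivial X := by
  haveI := hX
  by_contra hcon
  rw [not_nontrivial_iff_subsingleton] at hcon
  apply id_nonzero X
  apply Action.hom_ext
  apply FGModuleCat.hom_ext
  apply LinearMap.ext
  intro x
  have hs : Subsingleton (X : Type) := hcon
  exact @Subsingleton.elim _ hs _ _

/-- Maschke averaging: if `End(X)` is one-dimensional then `X` has no nontrivial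
invariant submodules. -/
theorem inv_trivial_of_finrank_end_one (X : FDRep ℂ H) [Fintype H]
    (hX : Nontrivial X) (h1 : finrank ℂ (X ⟶ X) = 1)
    (p : Submodule ℂ X) (hp : ∀ (g : H) (x : X), x ∈ p → X.ρ g x ∈ p) :
    p = ⊥ ∨ p = ⊤ := by
  by_contra hcon
  push_neg at hcon
  obtain ⟨hbot, htop⟩ := hcon
  obtain ⟨q, hq⟩ := Submodule.exists_isCompl p
  set π₀ : X →ₗ[ℂ] X := p.subtype ∘ₗ p.projectionOnto q hq with hπ₀
  have hπ₀p : ∀ x ∈ p, π₀ x = x := fun x hx => by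
    simp [hπ₀, Submodule.projectionOnto_apply_left hq ⟨x, hx⟩]
  have hπ₀mem : ∀ x, π₀ x ∈ p := fun x => by simp [hπ₀]
  set c : ℂ := (Fintype.card H : ℂ) with hc
  have hc0 : c ≠ 0 := Nat.cast_ne_zero.mpr Fintype.card_ne_zero
  set π : X →ₗ[ℂ] X := c⁻¹ • ∑ g : H, (X.ρ g⁻¹ ∘ₗ π₀ ∘ₗ X.ρ g) with hπ
  have expand : ∀ y, π y = c⁻¹ • ∑ g : H, X.ρ g⁻¹ (π₀ (X.ρ g y)) := by
    intro y
    rw [hπ]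
    simp [LinearMap.sum_apply]
  have hmem : ∀ x, π x ∈ p := by
    intro x
    rw [expand]
    exact Submodule.smul_mem _ _ (Submodule.sum_mem _ fun g _ => hp g⁻¹ _ (hπ₀mem _))
  have hfix : ∀ x ∈ p, π x = x := by
    intro x hx
    rw [expand]
    have : ∀ g : H, X.ρ g⁻¹ (π₀ (X.ρ g x)) = x := by
      intro g
      rw [hπ₀p _ (hp g x hx), ← Module.End.mul_apply, ← map_mul, inv_mul_cancel, map_one]
      rfl
    rw [Finset.sum_congr rfl (fun g _ => this g), Finset.sum_const, Finset.card_univ]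
    rw [← Nat.cast_smul_eq_nsmul ℂ, smul_smul, inv_mul_cancel₀ hc0, one_smul]
  have key : ∀ (h : H) (x : X), π (X.ρ h x) = X.ρ h (π x) := by
    intro h x
    rw [expand, expand, map_smul, map_sum]
    congr 1
    refine Fintype.sum_equiv (Equiv.mulRight h) _ _ (fun k => ?_)
    simp only [Equiv.coe_mulRight, ← Module.End.mul_apply, ← map_mul, mul_inv_rev]
    rw [← mul_assoc (X.ρ h), ← map_mul, mul_inv_cancel_left]
  set f : X ⟶ X := ⟨FGModuleCat.ofHom π, fun h => FGModuleCat.hom_ext (LinearMap.ext fun x => key h x)⟩ with hfdef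
  have hid : (𝟙 X : X ⟶ X) ≠ 0 := by
    obtain ⟨x, hx⟩ := exists_ne (0 : X)
    intro h
    apply hx
    calc x = (𝟙 X : X ⟶ X).hom x := rfl
      _ = (0 : X ⟶ X).hom x := by rw [h]
      _ = 0 := rfl
  obtain ⟨cf, hcf⟩ := (finrank_eq_one_iff_of_nonzero' (𝟙 X) hid).mp h1 f
  have hfx : ∀ x : X, π x = cf • x := by
    intro x
    calc π x = f.hom x := rfl
      _ = ((cf • 𝟙 X : X ⟶ X)).hom x := by rw [hcf]
      _ = cf • x := rfl
  obtain ⟨x₀, hx₀p, hx₀⟩ := Submodule.exists_mem_ne_zero_of_ne_bot hbot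
  have hcf1 : cf = 1 := by
    have h₁ : cf • x₀ = x₀ := (hfx x₀).symm.trans (hfix x₀ hx₀p)
    have : (cf - 1) • x₀ = 0 := by rw [sub_smul, one_smul, h₁, sub_self]
    rcases smul_eq_zero.mp this with h | h
    · exact sub_eq_zero.mp h
    · exact absurd h hx₀
  obtain ⟨y, hy⟩ : ∃ y : X, y ∉ p := by
    by_contra hall
    push_neg at hall
    exact htop (Submodule.eq_top_iff'.mpr hall)
  apply hy
  have : π y = y := by rw [hfx, hcf1, one_smul]
  exact this ▸ hmem y

/-- Unnormalized dimension formula for Hom spaces via characters. -/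
theorem char_sum_eq_card_mul_finrank [Fintype H] (V W : FDRep ℂ H) :
    ∑ g : H, V.character g * W.character g⁻¹ =
      (Fintype.card H : ℂ) * (finrank ℂ (W ⟶ V) : ℂ) := by
  have hc0 : ((Fintype.card H : ℂ)) ≠ 0 := Nat.cast_ne_zero.mpr Fintype.card_ne_zero
  letI : Invertible ((Fintype.card H : ℂ)) := invertibleOfNonzero hc0
  have hA : ⅟(Fintype.card H : ℂ) • ∑ g : H, V.character g * W.character g⁻¹ =
      (finrank ℂ (W ⟶ V) : ℂ) := by
    conv_lhs =>
      enter [2, 2, g]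
      rw [mul_comm, ← FDRep.char_dual, ← Pi.mul_apply, ← FDRep.char_tensor]
      rw [FDRep.char_iso (FDRep.dualTensorIsoLinHom W.ρ V)]
    rw [smul_eq_mul, invOf_eq_inv, ← Nat.card_eq_fintype_card]
    rw [FDRep.average_char_eq_finrank_invariants]
    rw [show (FDRep.of (linHom W.ρ V.ρ)).ρ = linHom W.ρ V.ρ from FDRep.of_ρ' (linHom W.ρ V.ρ)]
    erw [(linHom.invariantsEquivFDRepHom (G := H) W V).finrank_eq]
  calc ∑ g : H, V.character g * W.character g⁻¹
      = (Fintype.card H : ℂ) * (⅟(Fintype.card H : ℂ) •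
          ∑ g : H, V.character g * W.character g⁻¹) := by
        rw [smul_eq_mul, ← mul_assoc, mul_invOf_self, one_mul]
    _ = (Fintype.card H : ℂ) * (finrank ℂ (W ⟶ V) : ℂ) := by rw [hA]

/-! ### Twisting by a one-dimensional character -/

def twist (X : FDRep ℂ H) (χ : H →* ℂˣ) : FDRep ℂ H :=
  FDRep.of (V := X)
    { toFun := fun g => (χ g : ℂ) • X.ρ g
      map_one' := by simp
      map_mul' := fun g h => by
        ext x
        show (χ (g * h) : ℂ) • X.ρ (g * h) x
            = (((χ g : ℂ) • X.ρ g) * ((χ h : ℂ) • X.ρ h)) x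
        rw [map_mul, map_mul, Units.val_mul]
        simp only [LinearMap.smul_apply, Module.End.mul_apply, map_smul, smul_smul]
        rw [mul_comm] }

theorem twist_ρ (X : FDRep ℂ H) (χ : H →* ℂˣ) (g : H) :
    (twist X χ).ρ g = (χ g : ℂ) • X.ρ g := rfl

theorem twist_char (X : FDRep ℂ H) (χ : H →* ℂˣ) (g : H) :
    (twist X χ).character g = (χ g : ℂ) * X.character g := by
  show LinearMap.trace ℂ _ ((χ g : ℂ) • X.ρ g) = _
  rw [map_smul]
  rfl

theorem twist_simple (X : FDRep ℂ H) (hX : Simple X) (χ : H →* ℂˣ) :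
    Simple (twist X χ) := by
  apply simple_of_inv_trivial
  · exact nontrivial_of_simple X hX
  · intro p hp
    apply inv_trivial_of_simple X hX p
    intro g x hx
    have h1 : (twist X χ).ρ g x ∈ p := hp g x hx
    rw [twist_ρ] at h1
    have h2 : X.ρ g x = (χ g : ℂ)⁻¹ • ((χ g : ℂ) • X.ρ g x) := by
      rw [smul_smul, inv_mul_cancel₀ (Units.ne_zero (χ g)), one_smul]
    rw [h2]
    exact Submodule.smul_mem _ _ h1

theorem intertwiner_of_iso (X : FDRep ℂ H) (χ : H →* ℂˣ) (i : twist X χ ≅ X) :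
    ∃ e : X.V ≃ₗ[ℂ] X.V, ∀ g : H,
      (e : X.V →ₗ[ℂ] X.V) ∘ₗ X.ρ g = ((χ g : ℂ) • X.ρ g) ∘ₗ (e : X.V →ₗ[ℂ] X.V) := by
  refine ⟨LinearEquiv.ofLinear i.inv.hom.hom.hom i.hom.hom.hom.hom ?_ ?_, fun g => ?_⟩
  · exact LinearMap.ext fun x =>
      congrArg (fun (u : twist X χ ⟶ twist X χ) => u.hom x) i.hom_inv_id
  · exact LinearMap.ext fun x => congrArg (fun (u : X ⟶ X) => u.hom x) i.inv_hom_id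
  · apply LinearMap.ext
    intro x
    exact hom_comm_apply' i.inv g x

def twistOneIso (X : FDRep ℂ H) : twist X (1 : H →* ℂˣ) ≅ X where
  hom := ⟨FGModuleCat.ofHom LinearMap.id, fun g => by
    ext x; show ((1 : H →* ℂˣ) g : ℂ) • X.ρ g x = X.ρ g x; simp⟩
  inv := ⟨FGModuleCat.ofHom LinearMap.id, fun g => by
    ext x; show X.ρ g x = ((1 : H →* ℂˣ) g : ℂ) • X.ρ g x; simp⟩
  hom_inv_id := by apply Action.hom_ext; rfl
  inv_hom_id := by apply Action.hom_ext; rfl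

/-! ### Characters of a finite cyclic group over `ℂ` -/

section Cyclic

variable {C : Type} [Group C] [Finite C] [IsCyclic C]

instance (priority := low) : CommGroup C := IsCyclic.commGroup

theorem card_characters : Nat.card (C →* ℂˣ) = Nat.card C := by
  haveI : NeZero (Monoid.exponent C) := ⟨Monoid.exponent_ne_zero_of_finite⟩
  obtain ⟨e⟩ := CommGroup.monoidHom_mulEquiv_of_hasEnoughRootsOfUnity C ℂ
  exact Nat.card_congr e.toEquiv

instance : Finite (C →* ℂˣ) := by
  haveI : NeZero (Monoid.exponent C) := ⟨Monoid.exponent_ne_zero_of_finite⟩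
  obtain ⟨e⟩ := CommGroup.monoidHom_mulEquiv_of_hasEnoughRootsOfUnity C ℂ
  exact Finite.of_equiv _ e.toEquiv.symm

instance : Fintype (C →* ℂˣ) := Fintype.ofFinite _

theorem sum_characters {c : C} (hc : c ≠ 1) : ∑ ψ : C →* ℂˣ, ((ψ c : ℂ)) = 0 := by
  haveI : NeZero (Monoid.exponent C) := ⟨Monoid.exponent_ne_zero_of_finite⟩
  obtain ⟨ψ₀, hψ₀⟩ := CommGroup.exists_apply_ne_one_of_hasEnoughRootsOfUnity C ℂ hc
  have key : (ψ₀ c : ℂ) * ∑ ψ : C →* ℂˣ, ((ψ c : ℂ)) = ∑ ψ : C →* ℂˣ, ((ψ c : ℂ)) := by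
    rw [Finset.mul_sum]
    refine Fintype.sum_equiv (Equiv.mulLeft ψ₀) _ _ (fun ψ => ?_)
    simp [Units.val_mul]
  have h1 : ((ψ₀ c : ℂ) - 1) * ∑ ψ : C →* ℂˣ, ((ψ c : ℂ)) = 0 := by
    rw [sub_mul, one_mul, key, sub_self]
  rcases mul_eq_zero.mp h1 with h | h
  · exfalso
    apply hψ₀
    ext
    exact sub_eq_zero.mp h
  · exact h

end Cyclic

/-! ### The semidirect product -/

section SDP

variable {N C : Type} [Group N] [Group C] (φ : C →* MulAut N)

def sdpEquiv : (N ⋊[φ] C) ≃ N × C where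
  toFun g := (g.left, g.right)
  invFun p := ⟨p.1, p.2⟩
  left_inv _ := rfl
  right_inv _ := rfl

instance [Finite N] [Finite C] : Finite (N ⋊[φ] C) :=
  Finite.of_equiv _ (sdpEquiv φ).symm

end SDP

end

end CliffordAux

namespace CliffordAux
noncomputable section
open Module Representation SemidirectProduct

variable {N C : Type} [Group N] [Group C] [Finite N] [Finite C] [IsCyclic C]
variable (φ : C →* MulAut N)

theorem key_sum [Fintype N] [Fintype C] [Fintype (N ⋊[φ] C)]
    (ρ : FDRep ℂ (N ⋊[φ] C)) :
    ∑ ψ : C →* ℂˣ, (finrank ℂ (twist ρ (ψ.comp rightHom) ⟶ ρ) : ℂ)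
      = (finrank ℂ ((FDRep.of (ρ.ρ.comp (inl : N →* N ⋊[φ] C))) ⟶
          (FDRep.of (ρ.ρ.comp (inl : N →* N ⋊[φ] C)))) : ℂ) := by
  classical
  set res := FDRep.of (ρ.ρ.comp (inl : N →* N ⋊[φ] C)) with hres
  have hcard : (Fintype.card (N ⋊[φ] C) : ℂ)
      = (Fintype.card N : ℂ) * (Fintype.card C : ℂ) := by
    rw [← Nat.cast_mul]
    congr 1
    rw [Fintype.card_congr (sdpEquiv φ), Fintype.card_prod]
  have hcG : ((Fintype.card (N ⋊[φ] C) : ℂ)) ≠ 0 := Nat.cast_ne_zero.mpr Fintype.card_ne_zero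
  have hcardChars : (Fintype.card (C →* ℂˣ) : ℂ) = (Fintype.card C : ℂ) := by
    congr 1
    rw [← Nat.card_eq_fintype_card, ← Nat.card_eq_fintype_card]
    exact card_characters
  -- step 1: big sum identity
  have step1 : (Fintype.card (N ⋊[φ] C) : ℂ) * ∑ ψ : C →* ℂˣ,
      (finrank ℂ (twist ρ (ψ.comp rightHom) ⟶ ρ) : ℂ)
      = ∑ g : N ⋊[φ] C, (ρ.character g * ρ.character g⁻¹) *
          (if rightHom g = (1 : C) then (Fintype.card C : ℂ) else 0) := by
    rw [Finset.mul_sum]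
    have hψ : ∀ ψ : C →* ℂˣ,
        (Fintype.card (N ⋊[φ] C) : ℂ) * (finrank ℂ (twist ρ (ψ.comp rightHom) ⟶ ρ) : ℂ)
        = ∑ g : N ⋊[φ] C, (ρ.character g * ρ.character g⁻¹) * ((ψ ((rightHom g)⁻¹) : ℂ)) := by
      intro ψ
      rw [← char_sum_eq_card_mul_finrank]
      refine Finset.sum_congr rfl (fun g _ => ?_)
      rw [twist_char]
      have : (ψ.comp rightHom) g⁻¹ = ψ ((rightHom g)⁻¹) := by
        rw [MonoidHom.comp_apply, map_inv]
      rw [this]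
      ring
    rw [Finset.sum_congr rfl (fun ψ _ => hψ ψ)]
    rw [Finset.sum_comm]
    refine Finset.sum_congr rfl (fun g _ => ?_)
    rw [← Finset.mul_sum]
    congr 1
    by_cases h : rightHom g = (1 : C)
    · rw [if_pos h, h]
      simp only [inv_one, map_one, Units.val_one]
      rw [Finset.sum_const, Finset.card_univ, nsmul_eq_mul, mul_one]
      exact hcardChars
    · rw [if_neg h]
      exact sum_characters (inv_ne_one.mpr h)
  -- step 2: restrict the g-sum to N
  have step2 : ∑ g : N ⋊[φ] C, (ρ.character g * ρ.character g⁻¹) *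
        (if rightHom g = (1 : C) then (Fintype.card C : ℂ) else 0)
      = (Fintype.card C : ℂ) * ∑ n : N, res.character n * res.character n⁻¹ := by
    rw [Fintype.sum_equiv (sdpEquiv φ)
      (fun g => (ρ.character g * ρ.character g⁻¹) *
        (if rightHom g = (1 : C) then (Fintype.card C : ℂ) else 0))
      (fun p => (ρ.character ⟨p.1, p.2⟩ * ρ.character (⟨p.1, p.2⟩ : N ⋊[φ] C)⁻¹) *
        (if p.2 = (1 : C) then (Fintype.card C : ℂ) else 0))
      (fun g => rfl)]
    rw [Fintype.sum_prod_type]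
    rw [Finset.mul_sum]
    refine Finset.sum_congr rfl (fun n _ => ?_)
    rw [Finset.sum_congr rfl (fun c _ => by
      rw [mul_ite, mul_zero] :
      ∀ c ∈ Finset.univ, _ = if c = (1 : C) then
        (ρ.character ⟨n, c⟩ * ρ.character (⟨n, c⟩ : N ⋊[φ] C)⁻¹) * (Fintype.card C : ℂ) else 0)]
    rw [Finset.sum_ite_eq' Finset.univ (1 : C)]
    rw [if_pos (Finset.mem_univ _)]
    have h1 : (⟨n, 1⟩ : N ⋊[φ] C) = inl n := rfl
    have h2 : res.character n = ρ.character (inl n) := rfl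
    have h3 : res.character n⁻¹ = ρ.character ((inl n : N ⋊[φ] C))⁻¹ := by
      show ρ.character (inl n⁻¹) = ρ.character (inl n)⁻¹
      rw [map_inv]
    rw [h1, h2, h3]
    ring
  -- step 3: the N-side dimension formula
  have step3 : ∑ n : N, res.character n * res.character n⁻¹
      = (Fintype.card N : ℂ) * (finrank ℂ (res ⟶ res) : ℂ) :=
    char_sum_eq_card_mul_finrank res res
  apply mul_left_cancel₀ hcG
  rw [step1, step2, step3, hcard]
  ring
end
end CliffordAux

open CategoryTheory CliffordAux Module SemidirectProduct

/-- Let `G = N ⋊ C` with `N` normal and `C` cyclic, and `ρ` an irreducible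
representation of `G`. Then `ρ|_N` is irreducible if and only if `ρ` is not isomorphic to
`ρ ⊗ χ` for any nontrivial one-dimensional character `χ` of `G` trivial on `N`. -/
theorem restriction_irreducible_iff_no_twist
    {N C : Type} [Group N] [Group C] [Finite N] [Finite C] [IsCyclic C]
    (φ : C →* MulAut N)
    (ρ : FDRep ℂ (N ⋊[φ] C)) (hρ : Simple ρ) :
    Simple (FDRep.of (ρ.ρ.comp (SemidirectProduct.inl : N →* N ⋊[φ] C))) ↔
      ∀ χ : (N ⋊[φ] C) →* ℂˣ, (∀ n : N, χ (SemidirectProduct.inl n) = 1) → χ ≠ 1 →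
        ¬ ∃ e : ρ.V ≃ₗ[ℂ] ρ.V, ∀ g : N ⋊[φ] C,
            (e : ρ.V →ₗ[ℂ] ρ.V) ∘ₗ ρ.ρ g = ((χ g : ℂ) • ρ.ρ g) ∘ₗ (e : ρ.V →ₗ[ℂ] ρ.V) := by
  classical
  letI : Fintype N := Fintype.ofFinite N
  letI : Fintype C := Fintype.ofFinite C
  letI : Fintype (N ⋊[φ] C) := Fintype.ofFinite _
  have hnt : Nontrivial ρ := nontrivial_of_simple ρ hρ
  haveI hntV : Nontrivial (ρ.V : Type) := hnt
  constructor
  · -- forward: restriction simple → no twists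
    intro hsimp χ hχN hχ1
    rintro ⟨e, he⟩
    haveI := hsimp
    -- e is an endomorphism of the restriction
    set f : (FDRep.of (ρ.ρ.comp (inl : N →* N ⋊[φ] C))) ⟶
        (FDRep.of (ρ.ρ.comp (inl : N →* N ⋊[φ] C))) :=
      ⟨FGModuleCat.ofHom (e : ρ.V →ₗ[ℂ] ρ.V), fun n => by
        apply FGModuleCat.hom_ext
        apply LinearMap.ext
        intro x
        show (e : ρ.V →ₗ[ℂ] ρ.V) (ρ.ρ (inl n) x) = ρ.ρ (inl n) ((e : ρ.V →ₗ[ℂ] ρ.V) x)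
        have h := he (inl n)
        rw [hχN n] at h
        have hx := LinearMap.ext_iff.mp h x
        simpa using hx⟩ with hf
    obtain ⟨c, hc⟩ := endomorphism_simple_eq_smul_id (𝕜 := ℂ) f
    have hcx : ∀ x : ρ.V, e x = c • x := by
      intro x
      calc e x = f.hom x := rfl
        _ = ((c • 𝟙 (FDRep.of (ρ.ρ.comp (inl : N →* N ⋊[φ] C))) :
              (FDRep.of (ρ.ρ.comp (inl : N →* N ⋊[φ] C))) ⟶
                (FDRep.of (ρ.ρ.comp (inl : N →* N ⋊[φ] C))))).hom x := by rw [hc]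
        _ = c • x := rfl
    obtain ⟨v, hv⟩ := exists_ne (0 : ρ.V)
    have hc0 : c ≠ 0 := by
      intro h0
      apply hv
      have : e v = 0 := by rw [hcx, h0, zero_smul]
      have h2 := congrArg e.symm this
      rwa [e.symm_apply_apply, map_zero] at h2
    apply hχ1
    refine MonoidHom.ext fun g => ?_
    show χ g = 1
    have hL : c • (ρ.ρ g v) = (χ g : ℂ) • (c • ρ.ρ g v) := by
      have h1 : ((e : ρ.V →ₗ[ℂ] ρ.V)) (ρ.ρ g v) = c • ρ.ρ g v := hcx _
      have h2 : ((e : ρ.V →ₗ[ℂ] ρ.V)) v = c • v := hcx _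
      calc c • ρ.ρ g v = (e : ρ.V →ₗ[ℂ] ρ.V) (ρ.ρ g v) := h1.symm
        _ = ((χ g : ℂ) • ρ.ρ g) ((e : ρ.V →ₗ[ℂ] ρ.V) v) := LinearMap.ext_iff.mp (he g) v
        _ = ((χ g : ℂ) • ρ.ρ g) (c • v) := by rw [h2]
        _ = (χ g : ℂ) • ρ.ρ g (c • v) := rfl
        _ = (χ g : ℂ) • (c • ρ.ρ g v) := by rw [map_smul]
    have hgv : ρ.ρ g v ≠ 0 := by
      intro h0
      apply hv
      have : ρ.ρ g⁻¹ (ρ.ρ g v) = 0 := by rw [h0, map_zero]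
      rwa [← Module.End.mul_apply, ← map_mul, inv_mul_cancel, map_one, Module.End.one_apply] at this
    have hsc : (c - (χ g : ℂ) * c) • ρ.ρ g v = 0 := by
      rw [sub_smul, mul_smul, sub_eq_zero]
      exact hL
    rcases smul_eq_zero.mp hsc with h1 | h1
    · have h2 : c * (1 - (χ g : ℂ)) = 0 := by linear_combination h1
      rcases mul_eq_zero.mp h2 with h3 | h3
      · exact absurd h3 hc0
      · exact Units.ext (sub_eq_zero.mp h3).symm
    · exact absurd h1 hgv
  · -- reverse: no twists → restriction simple
    intro hyp
    set res := FDRep.of (ρ.ρ.comp (inl : N →* N ⋊[φ] C)) with hres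
    -- all the twisted representations are simple
    haveI hsimps : ∀ ψ : C →* ℂˣ, Simple (twist ρ (ψ.comp rightHom)) :=
      fun ψ => twist_simple ρ hρ _
    haveI := hρ
    -- evaluate each summand
    have heval : ∀ ψ : C →* ℂˣ, (finrank ℂ (twist ρ (ψ.comp rightHom) ⟶ ρ)) =
        if ψ = 1 then 1 else 0 := by
      intro ψ
      haveI := hsimps ψ
      by_cases hψ : ψ = 1
      · rw [if_pos hψ, hψ]
        rw [FDRep.finrank_hom_simple_simple]
        rw [if_pos ⟨by rw [MonoidHom.one_comp]; exact twistOneIso ρ⟩]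
      · rw [if_neg hψ]
        rw [FDRep.finrank_hom_simple_simple]
        rw [if_neg]
        rintro ⟨i⟩
        obtain ⟨e, he⟩ := intertwiner_of_iso ρ (ψ.comp rightHom) i
        refine hyp (ψ.comp rightHom) (fun n => ?_) (fun h1 => hψ ?_) ⟨e, he⟩
        · show ψ (rightHom (inl n)) = 1
          rw [rightHom_inl, map_one]
        · refine MonoidHom.ext fun c => ?_
          show ψ c = 1
          have := congrArg (fun (u : (N ⋊[φ] C) →* ℂˣ) => u (inr c)) h1
          simpa using this
    have hsum := key_sum φ ρ
    have hsum' : ((finrank ℂ (res ⟶ res) : ℂ)) = ∑ ψ : C →* ℂˣ, if ψ = 1 then (1 : ℂ) else 0 := by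
      rw [← hsum]
      refine Finset.sum_congr rfl fun ψ _ => ?_
      rw [heval ψ]
      split_ifs <;> simp
    rw [Finset.sum_ite_eq' Finset.univ (1 : C →* ℂˣ) (fun _ => (1 : ℂ)),
      if_pos (Finset.mem_univ _)] at hsum'
    have h1 : finrank ℂ (res ⟶ res) = 1 := by exact_mod_cast hsum' 
    apply simple_of_inv_trivial
    · exact hnt
    · intro p hp
      apply inv_trivial_of_finrank_end_one res hnt h1 p hp
end

section
/- Let n \ge 3 and let g \in SL_n(F_q) be an element whose centralizer in GL_n(F_q) maps onto F_q^* under the determinant map. If \rho is an irreducible representation of GL_n(F_q) and \pi an irreducible constituent of \rho|_{SL_n(F_q)}, then \chi_\rho(g)/\dim(\rho) = \chi_\pi(g)/\dim(\pi). -/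
open CategoryTheory

/-- The space of intertwining operators between two representations of the same group. -/
def intertwiners {k G V W : Type*} [CommRing k] [Monoid G]
    [AddCommGroup V] [Module k V] [AddCommGroup W] [Module k W]
    (ρ₁ : Representation k G V) (ρ₂ : Representation k G W) :
    Submodule k (V →ₗ[k] W) where
  carrier := {T | ∀ g : G, T ∘ₗ ρ₁ g = ρ₂ g ∘ₗ T}
  add_mem' := by
    intro T S hT hS g
    simp only [LinearMap.add_comp, LinearMap.comp_add, hT g, hS g]
  zero_mem' := by
    intro g
    simp
  smul_mem' := by
    intro c T hT g
    simp only [LinearMap.smul_comp, LinearMap.comp_smul, hT g]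

open Module


lemma character_ratio_schur_scalar {k G : Type} [Field k] [IsAlgClosed k] [Monoid G]
    (X : FDRep k G) [Simple X] (T : X →ₗ[k] X)
    (hT : ∀ g : G, T ∘ₗ X.ρ g = X.ρ g ∘ₗ T) :
    ∃ c : k, T = c • LinearMap.id := by
  let f : X ⟶ X := ⟨FGModuleCat.ofHom T, fun g => by ext v; exact LinearMap.congr_fun (hT g) v⟩
  have h1 : finrank k (X ⟶ X) = 1 := by
    rw [FDRep.finrank_hom_simple_simple]
    simp only [Nonempty.intro (Iso.refl X), if_pos]
  obtain ⟨c, hc⟩ := (finrank_eq_one_iff_of_nonzero' (𝟙 X) (id_nonzero X)).mp h1 f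
  refine ⟨c, ?_⟩
  have h2 := congrArg Action.Hom.hom hc
  rw [Action.smul_hom] at h2
  have h3 := congrArg (fun φ => φ.hom.hom) h2.symm
  exact h3

lemma character_ratio_finrank_pos {k G : Type} [Field k] [Monoid G]
    (X : FDRep k G) [Simple X] : 0 < finrank k X := by
  rcases Nat.eq_zero_or_pos (finrank k X) with h0 | h
  · exfalso
    have hss : Subsingleton X := finrank_zero_iff.mp h0
    apply id_nonzero X
    ext v
    exact hss.elim _ _
  · exact h

/-- General character-ratio lemma via class sums and Schur's lemma. -/
lemma character_ratio_aux {G H : Type} [Group G] [Group H] [Finite H]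
    (ι : H →* G) (hι : Function.Injective ι) (g : H)
    (hcent : ∀ y : G, ∃ c : G, c * ι g = ι g * c ∧ ∀ t : H, ∃ s : H, ι s = y * ι t * c⁻¹)
    (X : FDRep ℂ G) [Simple X] (Y : FDRep ℂ H) [Simple Y]
    (T : Y →ₗ[ℂ] X) (hT0 : T ≠ 0)
    (hT : ∀ x : H, T ∘ₗ Y.ρ x = X.ρ (ι x) ∘ₗ T) :
    X.character (ι g) / (finrank ℂ X : ℂ) = Y.character g / (finrank ℂ Y : ℂ) := by
  classical
  haveI : Fintype H := Fintype.ofFinite _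
  set zY : (Y : Type) →ₗ[ℂ] (Y : Type) := ∑ t : H, Y.ρ (t * g * t⁻¹) with hzY
  set zX : (X : Type) →ₗ[ℂ] (X : Type) := ∑ t : H, X.ρ (ι (t * g * t⁻¹)) with hzX
  -- zY commutes with Y
  have hzY_comm : ∀ x : H, zY ∘ₗ Y.ρ x = Y.ρ x ∘ₗ zY := by
    intro x
    rw [← Module.End.mul_eq_comp, ← Module.End.mul_eq_comp, hzY, Finset.sum_mul, Finset.mul_sum]
    have e1 : ∀ t : H, Y.ρ (t * g * t⁻¹) * Y.ρ x = Y.ρ ((t * g * t⁻¹) * x) :=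
      fun t => (map_mul Y.ρ _ _).symm
    have e2 : ∀ t : H, Y.ρ x * Y.ρ (t * g * t⁻¹) = Y.ρ (x * (t * g * t⁻¹)) :=
      fun t => (map_mul Y.ρ _ _).symm
    simp only [e1, e2]
    refine (Fintype.sum_equiv (Equiv.mulLeft x) _ _ ?_).symm
    intro t
    congr 1
    simp only [Equiv.coe_mulLeft]
    group
  -- zX commutes with all of G
  have hzX_comm : ∀ y : G, zX ∘ₗ X.ρ y = X.ρ y ∘ₗ zX := by
    intro y
    obtain ⟨c, hc_comm, hc_lift⟩ := hcent y
    choose s hs using hc_lift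
    have hs_inj : Function.Injective s := by
      intro t t' htt'
      have h1 : y * ι t * c⁻¹ = y * ι t' * c⁻¹ := by rw [← hs t, ← hs t', htt']
      exact hι (mul_left_cancel (mul_right_cancel h1))
    have hs_bij : Function.Bijective s := Finite.injective_iff_bijective.mp hs_inj
    have hkey : ∀ t : H, y * ι (t * g * t⁻¹) * y⁻¹ = ι (s t * g * (s t)⁻¹) := by
      intro t
      have h1 : c⁻¹ * ι g * c = ι g := by
        rw [mul_assoc, ← hc_comm, ← mul_assoc, inv_mul_cancel, one_mul]
      calc y * ι (t * g * t⁻¹) * y⁻¹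
          = (y * ι t) * (c⁻¹ * ι g * c) * (y * ι t)⁻¹ := by
            rw [h1, map_mul, map_mul, map_inv]; group
        _ = (y * ι t * c⁻¹) * ι g * (y * ι t * c⁻¹)⁻¹ := by group
        _ = ι (s t) * ι g * (ι (s t))⁻¹ := by rw [hs t]
        _ = ι (s t * g * (s t)⁻¹) := by rw [map_mul, map_mul, map_inv]
    have e2 : ∑ t : H, X.ρ (y * ι (t * g * t⁻¹) * y⁻¹) = ∑ t : H, X.ρ (ι (t * g * t⁻¹)) := by
      calc ∑ t : H, X.ρ (y * ι (t * g * t⁻¹) * y⁻¹)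
          = ∑ t : H, X.ρ (ι (s t * g * (s t)⁻¹)) :=
            Finset.sum_congr rfl fun t _ => by rw [hkey t]
        _ = ∑ t : H, X.ρ (ι (t * g * t⁻¹)) :=
            hs_bij.sum_comp fun u => X.ρ (ι (u * g * u⁻¹))
    rw [← Module.End.mul_eq_comp, ← Module.End.mul_eq_comp, hzX, Finset.sum_mul, Finset.mul_sum]
    calc ∑ t : H, X.ρ (ι (t * g * t⁻¹)) * X.ρ y
        = (∑ t : H, X.ρ (y * ι (t * g * t⁻¹) * y⁻¹)) * X.ρ y := by rw [e2, Finset.sum_mul]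
      _ = ∑ t : H, X.ρ (y * ι (t * g * t⁻¹) * y⁻¹) * X.ρ y := by rw [Finset.sum_mul]
      _ = ∑ t : H, X.ρ y * X.ρ (ι (t * g * t⁻¹)) := by
          refine Finset.sum_congr rfl fun t _ => ?_
          rw [← map_mul, ← map_mul]
          congr 1
          group
  -- Schur scalars
  obtain ⟨cY, hcY⟩ := character_ratio_schur_scalar Y zY hzY_comm
  obtain ⟨cX, hcX⟩ := character_ratio_schur_scalar X zX hzX_comm
  -- the intertwiner links the scalars
  have hTz : T ∘ₗ zY = zX ∘ₗ T := by
    ext v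
    rw [hzY, hzX]
    simp only [LinearMap.comp_apply, LinearMap.sum_apply, map_sum]
    refine Finset.sum_congr rfl fun t _ => ?_
    have h3 := LinearMap.congr_fun (hT (t * g * t⁻¹)) v
    simpa using h3
  have hc_eq : cY = cX := by
    have h4 : cY • T = cX • T := by
      have l1 : T ∘ₗ zY = cY • T := by rw [hcY]; ext v; simp
      have l2 : zX ∘ₗ T = cX • T := by rw [hcX]; ext v; simp
      rw [← l1, ← l2, hTz]
    by_contra hne
    have h5 : (cY - cX) • T = 0 := by rw [sub_smul, h4, sub_self]
    rcases smul_eq_zero.mp h5 with h6 | h6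
    · exact hne (sub_eq_zero.mp h6)
    · exact hT0 h6
  -- traces
  have hconjY : ∀ t : H, Y.character (t * g * t⁻¹) = Y.character g := by
    intro t
    rw [mul_assoc, FDRep.char_mul_comm, mul_assoc, inv_mul_cancel, mul_one]
  have hconjX : ∀ t : H, X.character (ι (t * g * t⁻¹)) = X.character (ι g) := by
    intro t
    rw [map_mul, map_mul, map_inv, mul_assoc, FDRep.char_mul_comm, mul_assoc,
      inv_mul_cancel, mul_one]
  have trY : cY * (finrank ℂ Y : ℂ) = (Fintype.card H : ℂ) * Y.character g := by
    have h7 : LinearMap.trace ℂ Y zY = (Fintype.card H : ℂ) * Y.character g := by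
      rw [hzY, map_sum]
      have h8 : ∀ t : H, (LinearMap.trace ℂ Y) (Y.ρ (t * g * t⁻¹)) = Y.character g :=
        fun t => hconjY t
      rw [Finset.sum_congr rfl fun t _ => h8 t]
      simp [Finset.sum_const, mul_comm]
    rw [hcY] at h7
    rw [← h7, map_smul, LinearMap.trace_id, smul_eq_mul]
  have trX : cX * (finrank ℂ X : ℂ) = (Fintype.card H : ℂ) * X.character (ι g) := by
    have h7 : LinearMap.trace ℂ X zX = (Fintype.card H : ℂ) * X.character (ι g) := by
      rw [hzX, map_sum]
      have h8 : ∀ t : H, (LinearMap.trace ℂ X) (X.ρ (ι (t * g * t⁻¹))) = X.character (ι g) :=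
        fun t => hconjX t
      rw [Finset.sum_congr rfl fun t _ => h8 t]
      simp [Finset.sum_const, mul_comm]
    rw [hcX] at h7
    rw [← h7, map_smul, LinearMap.trace_id, smul_eq_mul]
  -- conclude
  have hdX : (finrank ℂ X : ℂ) ≠ 0 :=
    Nat.cast_ne_zero.mpr (character_ratio_finrank_pos X).ne'
  have hdY : (finrank ℂ Y : ℂ) ≠ 0 :=
    Nat.cast_ne_zero.mpr (character_ratio_finrank_pos Y).ne'
  have hN : (Fintype.card H : ℂ) ≠ 0 := Nat.cast_ne_zero.mpr Fintype.card_ne_zero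
  rw [div_eq_div_iff hdX hdY]
  apply mul_left_cancel₀ hN
  linear_combination (-(finrank ℂ Y : ℂ)) * trX + (finrank ℂ X : ℂ) * trY
    - (finrank ℂ X : ℂ) * (finrank ℂ Y : ℂ) * hc_eq

/-- Let `n ≥ 3` and `g ∈ SL_n(F_q)` whose centralizer in `GL_n(F_q)` maps
onto `F_q^*` under the determinant. If `ρ` is an irreducible representation of `GL_n(F_q)`
and `π` an irreducible constituent of `ρ|_{SL_n}`, then the character ratios agree:
`χ_ρ(g)/dim ρ = χ_π(g)/dim π`. -/
theorem character_ratio_GL_SL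
    (F : Type) [Field F] [Fintype F] {n : ℕ} (hn : 3 ≤ n)
    (g : Matrix.SpecialLinearGroup (Fin n) F)
    (hcent : ∀ a : Fˣ, ∃ h : GL (Fin n) F,
      h * Matrix.SpecialLinearGroup.toGL g = Matrix.SpecialLinearGroup.toGL g * h ∧
      Matrix.GeneralLinearGroup.det h = a)
    (ρ : FDRep ℂ (GL (Fin n) F)) (hρ : Simple ρ)
    (π : FDRep ℂ (Matrix.SpecialLinearGroup (Fin n) F)) (hπ : Simple π)
    (hocc : intertwiners π.ρ (ρ.ρ.comp Matrix.SpecialLinearGroup.toGL) ≠ ⊥) :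
    ρ.character (Matrix.SpecialLinearGroup.toGL g) / (Module.finrank ℂ ρ.V : ℂ)
      = π.character g / (Module.finrank ℂ π.V : ℂ) := by
  classical
  haveI := hρ; haveI := hπ
  have hι : Function.Injective (Matrix.SpecialLinearGroup.toGL
      (n := Fin n) (R := F)) := by
    intro a b hab
    exact Subtype.ext (congrArg Units.val hab)
  have lift : ∀ u : GL (Fin n) F, Matrix.GeneralLinearGroup.det u = 1 →
      ∃ s : Matrix.SpecialLinearGroup (Fin n) F,
        Matrix.SpecialLinearGroup.toGL s = u := by
    intro u hu
    refine ⟨⟨(u : Matrix (Fin n) (Fin n) F), ?_⟩, Units.ext rfl⟩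
    have h2 := congrArg Units.val hu
    simpa [Matrix.GeneralLinearGroup.val_det_apply] using h2
  have hcent' : ∀ y : GL (Fin n) F, ∃ c : GL (Fin n) F,
      c * Matrix.SpecialLinearGroup.toGL g = Matrix.SpecialLinearGroup.toGL g * c ∧
      ∀ t : Matrix.SpecialLinearGroup (Fin n) F,
        ∃ s : Matrix.SpecialLinearGroup (Fin n) F,
          Matrix.SpecialLinearGroup.toGL s = y * Matrix.SpecialLinearGroup.toGL t * c⁻¹ := by
    intro y
    obtain ⟨c, hc_comm, hc_det⟩ := hcent (Matrix.GeneralLinearGroup.det y)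
    refine ⟨c, hc_comm, fun t => ?_⟩
    apply lift
    have hdt : Matrix.GeneralLinearGroup.det (Matrix.SpecialLinearGroup.toGL t) = 1 :=
      Matrix.SpecialLinearGroup.coeToGL_det t
    rw [map_mul, map_mul, map_inv, hdt, hc_det, mul_one, mul_inv_cancel]
  obtain ⟨T, hTmem, hT0⟩ := (Submodule.ne_bot_iff _).mp hocc
  have hT : ∀ x : Matrix.SpecialLinearGroup (Fin n) F,
      T ∘ₗ π.ρ x = ρ.ρ (Matrix.SpecialLinearGroup.toGL x) ∘ₗ T := fun x => hTmem x
  exact character_ratio_aux Matrix.SpecialLinearGroup.toGL hι g hcent' ρ π T hT0 hT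
end
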